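/- Let R be a commutative ring and M an (m+1)×(n+1) matrix over R such that some entry of M is a unit of R. Then there exist an invertible (m+1)×(m+1) matrix P over R, an invertible (n+1)×(n+1) matrix Q over R, and an m×n matrix M' over R such that P·M·Q is the block matrix whose upper-left 1×1 block is 1, whose off-diagonal blocks are zero, and whose lower-right block is M'. -/

import Mathlib

open Matrix

/-- If some entry of an `(m+1) × (n+1)` matrix `M` is a unit, then `M` is equivalent, via
invertible row and column operations, to a block matrix with upper-left `1 × 1` block `1`,
zero off-diagonal blocks, and some lower-right `m × n` block `M'`. -/
theorem exists_unit_entry_block_reduction {R : Type*} [CommRing R] {m n : ℕ}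
    (M : Matrix (Fin (m + 1)) (Fin (n + 1)) R) (h : ∃ i j, IsUnit (M i j)) :
    ∃ (P : Matrix (Fin (m + 1)) (Fin (m + 1)) R) (Q : Matrix (Fin (n + 1)) (Fin (n + 1)) R)
      (M' : Matrix (Fin m) (Fin n) R), IsUnit P ∧ IsUnit Q ∧
      P * M * Q = Matrix.reindex (finSumFinEquiv.trans (finCongr (Nat.add_comm 1 m)))
        (finSumFinEquiv.trans (finCongr (Nat.add_comm 1 n)))
        (Matrix.fromBlocks (1 : Matrix (Fin 1) (Fin 1) R) 0 0 M') := by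
  obtain ⟨i, j, hu⟩ := h
  set e₁ : Fin 1 ⊕ Fin m ≃ Fin (m + 1) := finSumFinEquiv.trans (finCongr (Nat.add_comm 1 m))
  set e₂ : Fin 1 ⊕ Fin n ≃ Fin (n + 1) := finSumFinEquiv.trans (finCongr (Nat.add_comm 1 n))
  set σ : Equiv.Perm (Fin (m + 1)) := Equiv.swap (e₁ (Sum.inl 0)) i with hσ
  set τ : Equiv.Perm (Fin (n + 1)) := Equiv.swap (e₂ (Sum.inl 0)) j with hτ
  set N : Matrix (Fin 1 ⊕ Fin m) (Fin 1 ⊕ Fin n) R := M.submatrix (σ ∘ e₁) (τ ∘ e₂) with hN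
  set a := N.toBlocks₁₁
  set b := N.toBlocks₁₂
  set c := N.toBlocks₂₁
  set d := N.toBlocks₂₂
  have hdet : IsUnit a.det := by
    rw [det_fin_one]
    simpa [a, hN, hσ, hτ, Matrix.toBlocks₁₁] using hu
  haveI : Invertible a := a.invertibleOfIsUnitDet hdet
  set P' : Matrix (Fin 1 ⊕ Fin m) (Fin 1 ⊕ Fin m) R := fromBlocks (⅟a) 0 (-(c * ⅟a)) 1
  set Q' : Matrix (Fin 1 ⊕ Fin n) (Fin 1 ⊕ Fin n) R := fromBlocks 1 (-(⅟a * b)) 0 1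
  have key : P' * N * Q' = fromBlocks 1 0 0 (d - c * (⅟a * b)) := by
    rw [← fromBlocks_toBlocks N]
    show fromBlocks (⅟a) 0 (-(c * ⅟a)) 1 * fromBlocks a b c d * Q' = _
    simp only [P', Q', fromBlocks_multiply, Matrix.one_mul, Matrix.mul_one, Matrix.zero_mul,
      Matrix.mul_zero, Matrix.neg_mul, Matrix.mul_neg, Matrix.mul_assoc, invOf_mul_self,
      add_zero, zero_add, neg_add_cancel, neg_add_eq_sub, sub_zero]
  have hperm : ∀ {k : ℕ} (f : Equiv.Perm (Fin k)),
      IsUnit (f.toPEquiv.toMatrix : Matrix (Fin k) (Fin k) R) := by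
    intro k f
    rw [Matrix.isUnit_iff_isUnit_det, Matrix.det_permutation]
    rcases Int.units_eq_one_or (Equiv.Perm.sign f) with hs | hs <;> simp [hs]
  have hP'u : IsUnit ((Matrix.reindex e₁ e₁) P') := by
    rw [Matrix.isUnit_iff_isUnit_det, reindex_apply, det_submatrix_equiv_self,
      det_fromBlocks_zero₁₂, det_one, mul_one]
    exact IsUnit.of_mul_eq_one a.det (by rw [← det_mul, invOf_mul_self, det_one])
  have hQ'u : IsUnit ((Matrix.reindex e₂ e₂) Q') := by
    rw [Matrix.isUnit_iff_isUnit_det, reindex_apply, det_submatrix_equiv_self,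
      det_fromBlocks_zero₂₁]
    simp
  refine ⟨Matrix.reindex e₁ e₁ P' * σ.toPEquiv.toMatrix,
    τ.toPEquiv.toMatrix * Matrix.reindex e₂ e₂ Q', d - c * (⅟a * b),
    hP'u.mul (hperm σ), (hperm τ).mul hQ'u, ?_⟩
  have hsub : M.submatrix (⇑σ) (⇑τ) = (Matrix.reindex e₁ e₂) N := by
    ext x y
    simp [hN]
  have h2 : (σ.toPEquiv.toMatrix : Matrix (Fin (m + 1)) (Fin (m + 1)) R) * M *
      (τ.toPEquiv.toMatrix : Matrix (Fin (n + 1)) (Fin (n + 1)) R) = (Matrix.reindex e₁ e₂) N := by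
    rw [PEquiv.toMatrix_toPEquiv_mul, PEquiv.mul_toMatrix_toPEquiv, hτ, Equiv.symm_swap, ← hτ,
      submatrix_submatrix, Function.comp_id, Function.id_comp, hsub]
  have h4 : Matrix.reindex e₁ e₁ P' * Matrix.reindex e₁ e₂ N * Matrix.reindex e₂ e₂ Q'
      = Matrix.reindex e₁ e₂ (P' * N * Q') := by
    simp only [reindex_apply, submatrix_mul_equiv]
  rw [← key, ← h4, ← h2]
  simp only [Matrix.mul_assoc]
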